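/- Let K₁ > 0 and K₂ be real constants with |K₂| < K₁. For every pair of differentiable functions z, u : ℝ → ℝ satisfying ż(t) = 1 − e^{z(t)} − u(t) and u̇(t) = K₁(e^{z(t)} − 1) − K₂ for all t ≥ 0, one has z(t) → log(K₂/K₁ + 1) and u(t) → −K₂/K₁ as t → ∞. That is, the unique equilibrium (z₀, u₀) of the transformed network-level system is globally asymptotically attractive. -/

import Mathlib

set_option maxHeartbeats 1000000
open Filter Real Set

lemma nonneg_on_Ici {f f' : ℝ → ℝ} (hd : ∀ x, HasDerivAt f (f' x) x)
    (h0 : f 0 = 0) (hnn : ∀ x, 0 ≤ x → 0 ≤ f' x) {x : ℝ} (hx : 0 ≤ x) : 0 ≤ f x := by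
  have hmono : MonotoneOn f (Set.Ici (0:ℝ)) := by
    apply monotoneOn_of_deriv_nonneg (convex_Ici 0)
    · exact fun y _ => (hd y).continuousAt.continuousWithinAt
    · exact fun y _ => (hd y).differentiableAt.differentiableWithinAt
    · intro y hy
      rw [(hd y).deriv]
      rw [interior_Ici] at hy
      exact hnn y (le_of_lt hy)
  have := hmono (Set.self_mem_Ici) (Set.mem_Ici.2 hx) hx
  linarith [h0 ▸ this]

lemma nonpos_on_Iic {f f' : ℝ → ℝ} (hd : ∀ x, HasDerivAt f (f' x) x)
    (h0 : f 0 = 0) (hnn : ∀ x, x ≤ 0 → 0 ≤ f' x) {x : ℝ} (hx : x ≤ 0) : f x ≤ 0 := by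
  have hmono : MonotoneOn f (Set.Iic (0:ℝ)) := by
    apply monotoneOn_of_deriv_nonneg (convex_Iic 0)
    · exact fun y _ => (hd y).continuousAt.continuousWithinAt
    · exact fun y _ => (hd y).differentiableAt.differentiableWithinAt
    · intro y hy
      rw [(hd y).deriv]
      rw [interior_Iic] at hy
      exact hnn y (le_of_lt hy)
  have := hmono (Set.mem_Iic.2 hx) (Set.self_mem_Iic) hx
  linarith [h0 ▸ this]

lemma lem_sq_le_D {x : ℝ} (hx : 0 ≤ x) : x^2/2 ≤ Real.exp x - 1 - x := by
  have hd : ∀ y : ℝ, HasDerivAt (fun y => Real.exp y - 1 - y - y^2/2)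
      (Real.exp y - 1 - y) y := by
    intro y
    have h := (((Real.hasDerivAt_exp y).sub_const 1).sub (hasDerivAt_id y)).sub
        ((hasDerivAt_pow 2 y).div_const 2)
    norm_num at h
    exact h
  have := nonneg_on_Ici hd (by norm_num) (fun y _ => by nlinarith [Real.add_one_le_exp y]) hx
  linarith

lemma lem_D_le_sq {x : ℝ} (hx : x ≤ 0) : Real.exp x - 1 - x ≤ x^2/2 := by
  have hd : ∀ y : ℝ, HasDerivAt (fun y => Real.exp y - 1 - y - y^2/2)
      (Real.exp y - 1 - y) y := by
    intro y
    have h := (((Real.hasDerivAt_exp y).sub_const 1).sub (hasDerivAt_id y)).sub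
        ((hasDerivAt_pow 2 y).div_const 2)
    norm_num at h
    exact h
  have := nonpos_on_Iic hd (by norm_num) (fun y _ => by nlinarith [Real.add_one_le_exp y]) hx
  linarith

lemma lem_exp_sub_one_le {x : ℝ} (hx : 0 ≤ x) : Real.exp x - 1 ≤ x * Real.exp x := by
  have hd : ∀ y : ℝ, HasDerivAt (fun y => y * Real.exp y - (Real.exp y - 1))
      (y * Real.exp y) y := by
    intro y
    have h := ((hasDerivAt_id y).mul (Real.hasDerivAt_exp y)).sub
      ((Real.hasDerivAt_exp y).sub_const 1)
    norm_num at h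
    exact h.congr_deriv (by ring)
  have := nonneg_on_Ici hd (by norm_num)
    (fun y hy => mul_nonneg hy (Real.exp_pos y).le) hx
  linarith

lemma lem_D_le_sq_exp {x : ℝ} (hx : 0 ≤ x) :
    Real.exp x - 1 - x ≤ x^2/2 * Real.exp x := by
  -- inner derivative function g' y = exp y * (y^2/2 + y - 1) + 1
  have hd' : ∀ y : ℝ, HasDerivAt (fun y => Real.exp y * (y^2/2 + y - 1) + 1)
      (Real.exp y * (y^2/2 + 2*y)) y := by
    intro y
    have hpoly : HasDerivAt (fun y : ℝ => y^2/2 + y - 1) (y + 1) y := by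
      have h := (((hasDerivAt_pow 2 y).div_const 2).add (hasDerivAt_id y)).sub_const 1
      norm_num at h
      exact (h.sub_const 1).congr_deriv (by ring)
    have h := ((Real.hasDerivAt_exp y).mul hpoly).add_const 1
    exact h.congr_deriv (by ring)
  have hg' : ∀ y : ℝ, 0 ≤ y → 0 ≤ Real.exp y * (y^2/2 + y - 1) + 1 := by
    intro y hy
    exact nonneg_on_Ici hd' (by norm_num)
      (fun w hw => by nlinarith [Real.exp_pos w]) hy
  have hd : ∀ y : ℝ, HasDerivAt (fun y => y^2/2 * Real.exp y - (Real.exp y - 1 - y))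
      (Real.exp y * (y^2/2 + y - 1) + 1) y := by
    intro y
    have h := (((hasDerivAt_pow 2 y).div_const 2).mul (Real.hasDerivAt_exp y)).sub
      (((Real.hasDerivAt_exp y).sub_const 1).sub (hasDerivAt_id y))
    norm_num at h
    exact h.congr_deriv (by ring)
  have := nonneg_on_Ici hd (by norm_num) (fun y hy => hg' y hy) hx
  linarith

lemma lem_sq_exp_le_D {x : ℝ} (hx : x ≤ 0) :
    x^2/2 * Real.exp x ≤ Real.exp x - 1 - x := by
  have hd : ∀ y : ℝ, HasDerivAt (fun y => Real.exp y * (y - 1) + 1 - y^2/2)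
      (y * (Real.exp y - 1)) y := by
    intro y
    have h := (((Real.hasDerivAt_exp y).mul ((hasDerivAt_id y).sub_const 1)).add_const 1).sub
      ((hasDerivAt_pow 2 y).div_const 2)
    norm_num at h
    exact h.congr_deriv (by ring)
  have hp : 0 ≤ Real.exp (-x) * (-x - 1) + 1 - (-x)^2/2 := by
    have := nonneg_on_Ici hd (by norm_num)
      (fun y hy => mul_nonneg hy (by nlinarith [Real.add_one_le_exp y])) (x := -x) (by linarith)
    linarith [this]
  have h1 : Real.exp x * Real.exp (-x) = 1 := by
    rw [← Real.exp_add]; norm_num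
  have h2 : 0 ≤ Real.exp x * (Real.exp (-x) * (-x - 1) + 1 - (-x)^2/2) :=
    mul_nonneg (Real.exp_pos x).le hp
  nlinarith [h2, h1]

lemma exp_diff_lower {b a m : ℝ} (hba : b ≤ a) (hmb : m ≤ b) :
    Real.exp m * (a - b) ≤ Real.exp a - Real.exp b := by
  have e1 : Real.exp a = Real.exp b * Real.exp (a - b) := by
    rw [← Real.exp_add]; ring_nf
  have e2 := Real.add_one_le_exp (a - b)
  have e3 : Real.exp m ≤ Real.exp b := Real.exp_le_exp.2 hmb
  nlinarith [Real.exp_pos b, sub_nonneg.2 hba, Real.exp_pos m]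

lemma exp_diff_upper {b a M : ℝ} (hba : b ≤ a) (haM : a ≤ M) :
    Real.exp a - Real.exp b ≤ Real.exp M * (a - b) := by
  have e1 : Real.exp a = Real.exp b * Real.exp (a - b) := by
    rw [← Real.exp_add]; ring_nf
  have e4 := lem_exp_sub_one_le (sub_nonneg.2 hba)
  have e5 : Real.exp a ≤ Real.exp M := Real.exp_le_exp.2 haM
  nlinarith [Real.exp_pos b, sub_nonneg.2 hba, Real.exp_pos a]

lemma Pbound {L U z₀ a : ℝ} (h1 : L ≤ a) (h2 : a ≤ U) (h3 : L ≤ z₀) (h4 : z₀ ≤ U) :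
    (Real.exp L)^2 * (a - z₀)^2 ≤ (Real.exp a - Real.exp z₀)^2 ∧
    (Real.exp a - Real.exp z₀)^2 ≤ (Real.exp U)^2 * (a - z₀)^2 ∧
    (Real.exp a - Real.exp z₀) * (a - z₀) ≤ Real.exp U * (a - z₀)^2 := by
  rcases le_total z₀ a with h | h
  · have hl := exp_diff_lower h h3
    have hu := exp_diff_upper h h2
    have h0 : (0:ℝ) ≤ Real.exp L * (a - z₀) :=
      mul_nonneg (Real.exp_pos L).le (by linarith)
    refine ⟨?_, ?_, ?_⟩ <;>
      nlinarith [hl, hu, h0, Real.exp_pos L, Real.exp_pos U, sub_nonneg.2 h,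
        sq_nonneg (a - z₀)]
  · have hl := exp_diff_lower h h1
    have hu := exp_diff_upper h h4
    have h0 : (0:ℝ) ≤ Real.exp L * (z₀ - a) :=
      mul_nonneg (Real.exp_pos L).le (by linarith)
    refine ⟨?_, ?_, ?_⟩ <;>
      nlinarith [hl, hu, h0, Real.exp_pos L, Real.exp_pos U, sub_nonneg.2 h,
        sq_nonneg (a - z₀)]

lemma P4bound {L U z₀ a : ℝ} (h1 : L ≤ a) (h2 : a ≤ U) (h3 : L ≤ z₀) (h4 : z₀ ≤ U) :
    Real.exp L / 2 * (a - z₀)^2 ≤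
      Real.exp a - Real.exp z₀ * a - (Real.exp z₀ - Real.exp z₀ * z₀) ∧
    Real.exp a - Real.exp z₀ * a - (Real.exp z₀ - Real.exp z₀ * z₀) ≤
      Real.exp U / 2 * (a - z₀)^2 := by
  have e1 : Real.exp a = Real.exp z₀ * Real.exp (a - z₀) := by
    rw [← Real.exp_add]; ring_nf
  have eid : Real.exp a - Real.exp z₀ * a - (Real.exp z₀ - Real.exp z₀ * z₀)
      = Real.exp z₀ * (Real.exp (a - z₀) - 1 - (a - z₀)) := by
    rw [e1]; ring
  have hLz : Real.exp L ≤ Real.exp z₀ := Real.exp_le_exp.2 h3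
  have hzU : Real.exp z₀ ≤ Real.exp U := Real.exp_le_exp.2 h4
  have haU : Real.exp a ≤ Real.exp U := Real.exp_le_exp.2 h2
  have hLa : Real.exp L ≤ Real.exp a := Real.exp_le_exp.2 h1
  rw [eid]
  rcases le_total 0 (a - z₀) with h | h
  · have hlo := lem_sq_le_D h
    have hhi := lem_D_le_sq_exp h
    constructor
    · nlinarith [Real.exp_pos z₀, sq_nonneg (a - z₀)]
    · nlinarith [Real.exp_pos z₀, sq_nonneg (a - z₀), e1]
  · have hlo := lem_sq_exp_le_D h
    have hhi := lem_D_le_sq h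
    constructor
    · nlinarith [Real.exp_pos z₀, sq_nonneg (a - z₀), e1]
    · nlinarith [Real.exp_pos z₀, sq_nonneg (a - z₀)]



lemma quad_low {K₁ c ε β₁ F h w : ℝ} (hK₁ : 0 < K₁) (hβ₁a : β₁ ≤ K₁*c/2)
    (hβ₁b : β₁ ≤ 1/2) (hε1 : ε ≤ β₁) (hε0 : 0 < ε)
    (p : c/2 * h^2 ≤ F) :
    β₁/2 * (h^2 + w^2) ≤ K₁ * F + w^2/2 + ε * (w * h) := by
  have t1 := mul_le_mul_of_nonneg_left p hK₁.le
  have t2 := mul_le_mul_of_nonneg_right hβ₁a (sq_nonneg h)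
  have t3 := mul_le_mul_of_nonneg_right hβ₁b (sq_nonneg w)
  have t4 := mul_nonneg hε0.le (sq_nonneg (w + h))
  have t5 := mul_le_mul_of_nonneg_right hε1 (add_nonneg (sq_nonneg h) (sq_nonneg w))
  nlinarith [t1, t2, t3, t4, t5]

lemma quad_upp {K₁ C ε β₂ F h w : ℝ} (hK₁ : 0 < K₁) (hβ₂a : K₁*C/2 ≤ β₂)
    (hβ₂b : (1:ℝ)/2 ≤ β₂) (hε0 : 0 < ε)
    (p : F ≤ C/2 * h^2) :
    K₁ * F + w^2/2 + ε * (w * h) ≤ (β₂ + ε/2) * (h^2 + w^2) := by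
  have t1 := mul_le_mul_of_nonneg_left p hK₁.le
  have t2 := mul_le_mul_of_nonneg_right hβ₂a (sq_nonneg h)
  have t3 := mul_le_mul_of_nonneg_right hβ₂b (sq_nonneg w)
  have t4 := mul_nonneg hε0.le (sq_nonneg (w - h))
  nlinarith [t1, t2, t3, t4]

lemma quad_der {K₁ C c ε δ G h w : ℝ} (hK₁ : 0 < K₁) (hε0 : 0 < ε)
    (hε2 : ε * (K₁*C + C^2/2) ≤ K₁*c^2/2) (hδ1 : δ ≤ K₁*c^2/2) (hδ2 : δ ≤ ε/2)
    (p2 : c^2 * h^2 ≤ G^2) (p3 : G^2 ≤ C^2 * h^2) (pGh : G * h ≤ C * h^2) :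
    -(K₁ * G^2) + ε * ((K₁ * G) * h + w * (-G - w)) ≤ -δ * (h^2 + w^2) := by
  have t1 := mul_le_mul_of_nonneg_left p2 hK₁.le
  have t2 := mul_le_mul_of_nonneg_left pGh (mul_nonneg hε0.le hK₁.le)
  have t3 := mul_le_mul_of_nonneg_left p3 (by positivity : (0:ℝ) ≤ ε/2)
  have t4 := mul_le_mul_of_nonneg_right hε2 (sq_nonneg h)
  have t5 := mul_le_mul_of_nonneg_right hδ1 (sq_nonneg h)
  have t6 := mul_le_mul_of_nonneg_right hδ2 (sq_nonneg w)
  have t7 := mul_nonneg hε0.le (sq_nonneg (w + G))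
  nlinarith [t1, t2, t3, t4, t5, t6, t7]

theorem transformed_system_attractive (K₁ K₂ : ℝ) (hK₁ : 0 < K₁)
    (hK₂ : |K₂| < K₁) :
    ∀ z u : ℝ → ℝ,
      (∀ t ≥ (0 : ℝ), HasDerivAt z (1 - Real.exp (z t) - u t) t) →
      (∀ t ≥ (0 : ℝ), HasDerivAt u (K₁ * (Real.exp (z t) - 1) - K₂) t) →
      Tendsto z atTop (nhds (Real.log (K₂ / K₁ + 1))) ∧
        Tendsto u atTop (nhds (-(K₂ / K₁))) := by
  intro z u hz hu
  obtain ⟨hK₂l, hK₂r⟩ := abs_lt.1 hK₂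
  obtain ⟨E, hE_def⟩ : ∃ E : ℝ, E = K₂ / K₁ + 1 := ⟨_, rfl⟩
  have hE0 : 0 < E := by
    have : -1 * K₁ < K₂ := by linarith
    have := (lt_div_iff₀ hK₁).2 this
    rw [hE_def]; linarith [(lt_div_iff₀ hK₁).2 (show (-1) * K₁ < K₂ by linarith)]
  have hE2 : E < 2 := by
    have : K₂ / K₁ < 1 := (div_lt_one hK₁).2 hK₂r
    rw [hE_def]; linarith
  obtain ⟨z₀, hz₀_def⟩ : ∃ w : ℝ, w = Real.log E := ⟨_, rfl⟩
  have hEz₀ : Real.exp z₀ = E := by rw [hz₀_def]; exact Real.exp_log hE0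
  have hu_tgt : -(K₂ / K₁) = 1 - E := by rw [hE_def]; ring
  have hKE : K₁ * (E - 1) = K₂ := by rw [hE_def]; field_simp; ring
  -- rewritten derivative of u
  have hu' : ∀ t, 0 ≤ t → HasDerivAt u (K₁ * (Real.exp (z t) - E)) t := by
    intro t ht
    have h := hu t ht
    convert h using 1
    linear_combination -hKE
  -- Lyapunov function V
  obtain ⟨V, hV_def⟩ : ∃ V : ℝ → ℝ, V = fun t =>
    K₁ * (Real.exp (z t) - E * z t) + (u t - (1 - E))^2 / 2 := ⟨_, rfl⟩
  have hV' : ∀ t, 0 ≤ t → HasDerivAt V (-(K₁ * (Real.exp (z t) - E)^2)) t := by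
    intro t ht
    rw [hV_def]
    have h1 := ((hz t ht).exp.sub ((hz t ht).const_mul E)).const_mul K₁
    have h2 := (((hu' t ht).sub_const (1 - E)).pow 2).div_const 2
    have h := h1.add h2
    exact h.congr_deriv (by push_cast; ring)
  have hVanti : AntitoneOn V (Set.Ici (0:ℝ)) := by
    apply antitoneOn_of_deriv_nonpos (convex_Ici 0)
    · exact fun t ht => (hV' t ht).continuousAt.continuousWithinAt
    · intro t ht
      rw [interior_Ici] at ht
      exact (hV' t (le_of_lt ht)).differentiableAt.differentiableWithinAt
    · intro t ht
      rw [interior_Ici] at ht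
      rw [(hV' t (le_of_lt ht)).deriv]
      have := mul_nonneg hK₁.le (sq_nonneg (Real.exp (z t) - E))
      linarith
  have hVle : ∀ t, 0 ≤ t → V t ≤ V 0 :=
    fun t ht => hVanti Set.self_mem_Ici (Set.mem_Ici.2 ht) ht
  obtain ⟨C0, hC0_def⟩ : ∃ c : ℝ, c = V 0 / K₁ := ⟨_, rfl⟩
  have hphi : ∀ t, 0 ≤ t → Real.exp (z t) - E * z t ≤ C0 := by
    intro t ht
    rw [hC0_def, le_div_iff₀ hK₁, hV_def]
    simp only
    have h := hVle t ht
    rw [hV_def] at h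
    simp only at h
    have hsq : 0 ≤ (u t - (1 - E))^2 / 2 := by positivity
    linarith only [h, hsq]
  have hphi_lb : ∀ a : ℝ, E * (1 - z₀) ≤ Real.exp a - E * a := by
    intro a
    have e1 : Real.exp a = E * Real.exp (a - z₀) := by
      rw [← hEz₀, ← Real.exp_add]; ring_nf
    have e2 := Real.add_one_le_exp (a - z₀)
    linarith only [e1, hE0.le, mul_le_mul_of_nonneg_left e2 hE0.le]
  have hz₀lt1 : z₀ < 1 := by
    rw [hz₀_def]
    exact lt_of_le_of_lt (Real.log_le_sub_one_of_pos hE0) (by linarith)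
  have hC0pos : 0 < C0 := by
    have h1 : (0:ℝ) < E * (1 - z₀) := mul_pos hE0 (by linarith)
    exact lt_of_lt_of_le h1 ((hphi_lb (z 0)).trans (hphi 0 le_rfl))
  -- bounds on z
  obtain ⟨A, hA_def⟩ : ∃ a : ℝ, a = E + Real.sqrt (E^2 + 2*C0) := ⟨_, rfl⟩
  obtain ⟨B, hB_def⟩ : ∃ b : ℝ, b = -(C0/E) := ⟨_, rfl⟩
  have hA0 : 0 < A := by
    rw [hA_def]
    have := Real.sqrt_nonneg (E^2 + 2*C0)
    linarith
  have hBz : ∀ t, 0 ≤ t → B ≤ z t := by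
    intro t ht
    rcases le_or_gt (z t) 0 with h | h
    · have h2 := hphi t ht
      have h3 := (Real.exp_pos (z t)).le
      have h4 : E * (-(z t)) ≤ C0 := by
        linarith only [h2, h3]
      rw [hB_def, neg_le, le_div_iff₀ hE0]
      linarith only [h4]
    · have : 0 < C0 / E := div_pos hC0pos hE0
      rw [hB_def]; linarith
  have hAz : ∀ t, 0 ≤ t → z t ≤ A := by
    intro t ht
    rcases le_or_gt (z t) 0 with h | h
    · linarith
    · have hD := lem_sq_le_D h.le
      have h2 := hphi t ht
      have h3 : (z t - E)^2 ≤ E^2 + 2*C0 := by linarith only [hD, h2, h.le]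
      have h4 : z t - E ≤ Real.sqrt (E^2 + 2*C0) := by
        have h5 := Real.sqrt_le_sqrt h3
        rw [Real.sqrt_sq_eq_abs] at h5
        exact (le_abs_self _).trans h5
      rw [hA_def]; linarith
  -- interval and exponential bounds
  obtain ⟨L, hL_def⟩ : ∃ l : ℝ, l = min B z₀ := ⟨_, rfl⟩
  obtain ⟨U, hU_def⟩ : ∃ x : ℝ, x = max A z₀ := ⟨_, rfl⟩
  obtain ⟨c, hc_def⟩ : ∃ x : ℝ, x = Real.exp L := ⟨_, rfl⟩
  obtain ⟨C, hC_def⟩ : ∃ x : ℝ, x = Real.exp U := ⟨_, rfl⟩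
  have hLz₀ : L ≤ z₀ := hL_def ▸ min_le_right _ _
  have hUz₀ : z₀ ≤ U := hU_def ▸ le_max_right A z₀
  have hLt : ∀ t, 0 ≤ t → L ≤ z t := fun t ht =>
    le_trans (hL_def ▸ min_le_left B z₀) (hBz t ht)
  have hUt : ∀ t, 0 ≤ t → z t ≤ U := fun t ht =>
    le_trans (hAz t ht) (hU_def ▸ le_max_left A z₀)
  have hc0 : 0 < c := hc_def ▸ Real.exp_pos L
  have hC0' : 0 < C := hC_def ▸ Real.exp_pos U
  have hcC : c ≤ C := by
    rw [hc_def, hC_def]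
    exact Real.exp_le_exp.2 (hLz₀.trans hUz₀)
  -- constants
  obtain ⟨β₁, hβ₁_def⟩ : ∃ x : ℝ, x = min (K₁*c/2) (1/2) := ⟨_, rfl⟩
  obtain ⟨β₂, hβ₂_def⟩ : ∃ x : ℝ, x = max (K₁*C/2) (1/2) := ⟨_, rfl⟩
  obtain ⟨ε, hε_def⟩ : ∃ x : ℝ, x = min β₁ (K₁*c^2/(2*(K₁*C + C^2/2 + 1))) := ⟨_, rfl⟩
  have hβ₁0 : 0 < β₁ := by
    rw [hβ₁_def]
    exact lt_min (by positivity) (by norm_num)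
  have hβ₁a : β₁ ≤ K₁*c/2 := hβ₁_def ▸ min_le_left _ _
  have hβ₁b : β₁ ≤ 1/2 := hβ₁_def ▸ min_le_right _ _
  have hβ₂a : K₁*C/2 ≤ β₂ := hβ₂_def ▸ le_max_left _ _
  have hβ₂b : (1:ℝ)/2 ≤ β₂ := hβ₂_def ▸ le_max_right _ _
  have hβ₂0 : 0 < β₂ := lt_of_lt_of_le (by norm_num) hβ₂b
  have hden : 0 < K₁*C + C^2/2 + 1 := by positivity
  have hε0 : 0 < ε := by
    rw [hε_def]
    exact lt_min hβ₁0 (by positivity)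
  have hε1 : ε ≤ β₁ := hε_def ▸ min_le_left _ _
  have hε2 : ε * (K₁*C + C^2/2) ≤ K₁*c^2/2 := by
    have h1 : ε ≤ K₁*c^2/(2*(K₁*C + C^2/2 + 1)) := hε_def ▸ min_le_right _ _
    have h2 : ε * (2*(K₁*C + C^2/2 + 1)) ≤ K₁*c^2 := by
      rw [le_div_iff₀ (by positivity)] at h1
      linarith
    linarith only [h2, hε0.le]
  obtain ⟨δ, hδ_def⟩ : ∃ x : ℝ, x = min (K₁*c^2/2) (ε/2) := ⟨_, rfl⟩
  have hδ0 : 0 < δ := by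
    rw [hδ_def]; exact lt_min (by positivity) (by positivity)
  have hδ1 : δ ≤ K₁*c^2/2 := hδ_def ▸ min_le_left _ _
  have hδ2 : δ ≤ ε/2 := hδ_def ▸ min_le_right _ _
  obtain ⟨α, hα_def⟩ : ∃ x : ℝ, x = δ / (β₂ + ε/2) := ⟨_, rfl⟩
  have hβε0 : 0 < β₂ + ε/2 := by positivity
  have hα0 : 0 < α := by rw [hα_def]; positivity
  have hαβ : α * (β₂ + ε/2) = δ := by
    rw [hα_def]; field_simp
  -- strict Lyapunov function
  obtain ⟨Vε, hVε_def⟩ : ∃ W : ℝ → ℝ, W = fun t =>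
      K₁ * (Real.exp (z t) - E * z t - (E - E * z₀)) + (u t - (1 - E))^2 / 2
        + ε * ((u t - (1 - E)) * (z t - z₀)) := ⟨_, rfl⟩
  obtain ⟨Dv, hDv_def⟩ : ∃ W : ℝ → ℝ, W = fun t =>
      -(K₁ * (Real.exp (z t) - E)^2)
        + ε * ((K₁ * (Real.exp (z t) - E)) * (z t - z₀)
          + (u t - (1 - E)) * (1 - Real.exp (z t) - u t)) := ⟨_, rfl⟩
  have hVε' : ∀ t, 0 ≤ t → HasDerivAt Vε (Dv t) t := by
    intro t ht
    rw [hVε_def, hDv_def]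
    have h1 := (((hz t ht).exp.sub ((hz t ht).const_mul E)).sub_const (E - E*z₀)).const_mul K₁
    have h2 := (((hu' t ht).sub_const (1 - E)).pow 2).div_const 2
    have h3 := ((((hu' t ht).sub_const (1 - E)).mul ((hz t ht).sub_const z₀))).const_mul ε
    have h := (h1.add h2).add h3
    exact h.congr_deriv (by push_cast; ring)
  -- quadratic bounds
  have hlow : ∀ t, 0 ≤ t →
      β₁/2 * ((z t - z₀)^2 + (u t - (1 - E))^2) ≤ Vε t := by
    intro t ht
    obtain ⟨p4l, p4u⟩ := P4bound (hLt t ht) (hUt t ht) hLz₀ hUz₀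
    rw [hEz₀] at p4l
    rw [hVε_def]
    simp only
    rw [← hc_def] at p4l
    exact quad_low hK₁ hβ₁a hβ₁b hε1 hε0 p4l
  have hupp : ∀ t, 0 ≤ t →
      Vε t ≤ (β₂ + ε/2) * ((z t - z₀)^2 + (u t - (1 - E))^2) := by
    intro t ht
    obtain ⟨p4l, p4u⟩ := P4bound (hLt t ht) (hUt t ht) hLz₀ hUz₀
    rw [hEz₀] at p4u
    rw [hVε_def]
    simp only
    rw [← hC_def] at p4u
    exact quad_upp hK₁ hβ₂a hβ₂b hε0 p4u
  have hder : ∀ t, 0 ≤ t →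
      Dv t ≤ -δ * ((z t - z₀)^2 + (u t - (1 - E))^2) := by
    intro t ht
    obtain ⟨p2, p3, pGh⟩ := Pbound (hLt t ht) (hUt t ht) hLz₀ hUz₀
    rw [hEz₀] at p2 p3 pGh
    rw [← hc_def] at p2
    rw [← hC_def] at p3 pGh
    rw [hDv_def]
    simp only
    have key := quad_der (w := u t - (1 - E)) hK₁ hε0 hε2 hδ1 hδ2 p2 p3 pGh
    have hid : (u t - (1 - E)) * (1 - Real.exp (z t) - u t)
        = (u t - (1 - E)) * (-(Real.exp (z t) - E) - (u t - (1 - E))) := by ring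
    rw [hid]
    exact key
  -- differential inequality
  have hDvle : ∀ t, 0 ≤ t → Dv t + α * Vε t ≤ 0 := by
    intro t ht
    have h1 := hder t ht
    have h2 := mul_le_mul_of_nonneg_left (hupp t ht) hα0.le
    rw [← mul_assoc, hαβ] at h2
    linarith only [h1, h2]
  -- exponential decay via monotonicity of t ↦ Vε t * exp (α t)
  obtain ⟨F, hF_def⟩ : ∃ F : ℝ → ℝ, F = fun t => Vε t * Real.exp (α * t) := ⟨_, rfl⟩
  have hF' : ∀ t, 0 ≤ t →
      HasDerivAt F ((Dv t + α * Vε t) * Real.exp (α * t)) t := by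
    intro t ht
    rw [hF_def]
    have hexp : HasDerivAt (fun s => Real.exp (α * s)) (Real.exp (α * t) * α) t := by
      have h := ((hasDerivAt_id t).const_mul α).exp
      simp only [id_eq, mul_one] at h
      exact h
    have h := (hVε' t ht).mul hexp
    exact h.congr_deriv (by ring)
  have hFanti : AntitoneOn F (Set.Ici (0:ℝ)) := by
    apply antitoneOn_of_deriv_nonpos (convex_Ici 0)
    · exact fun t ht => (hF' t ht).continuousAt.continuousWithinAt
    · intro t ht
      rw [interior_Ici] at ht
      exact (hF' t (le_of_lt ht)).differentiableAt.differentiableWithinAt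
    · intro t ht
      rw [interior_Ici] at ht
      rw [(hF' t (le_of_lt ht)).deriv]
      exact mul_nonpos_of_nonpos_of_nonneg (hDvle t (le_of_lt ht)) (Real.exp_pos _).le
  have hVεdecay : ∀ t, 0 ≤ t → Vε t ≤ Vε 0 * Real.exp (-(α * t)) := by
    intro t ht
    have h1 := hFanti Set.self_mem_Ici (Set.mem_Ici.2 ht) ht
    rw [hF_def] at h1
    simp only [mul_zero, Real.exp_zero, mul_one] at h1
    have h3 : Vε t ≤ Vε 0 / Real.exp (α * t) := (le_div_iff₀ (Real.exp_pos _)).2 h1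
    rw [Real.exp_neg]
    rw [div_eq_mul_inv] at h3
    exact h3
  have hVε00 : 0 ≤ Vε 0 := by
    have h0 : (0:ℝ) ≤ β₁/2 * ((z 0 - z₀)^2 + (u 0 - (1 - E))^2) := by positivity
    exact h0.trans (hlow 0 le_rfl)
  obtain ⟨M, hM_def⟩ : ∃ m : ℝ, m = 2/β₁ * Vε 0 := ⟨_, rfl⟩
  have hq : ∀ t, 0 ≤ t →
      (z t - z₀)^2 + (u t - (1 - E))^2 ≤ M * Real.exp (-(α * t)) := by
    intro t ht
    have h3 := (hlow t ht).trans (hVεdecay t ht)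
    have h4 := mul_le_mul_of_nonneg_left h3 (by positivity : (0:ℝ) ≤ 2/β₁)
    have h5 : 2/β₁ * (β₁/2 * ((z t - z₀)^2 + (u t - (1 - E))^2))
        = (z t - z₀)^2 + (u t - (1 - E))^2 := by
      field_simp
    rw [h5] at h4
    rw [hM_def]
    calc (z t - z₀)^2 + (u t - (1 - E))^2 ≤ 2/β₁ * (Vε 0 * Real.exp (-(α * t))) := h4
      _ = 2/β₁ * Vε 0 * Real.exp (-(α * t)) := by ring
  have htend : Tendsto (fun t => M * Real.exp (-(α * t))) atTop (nhds 0) := by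
    have h1 : Tendsto (fun t : ℝ => α * t) atTop atTop :=
      Tendsto.const_mul_atTop hα0 tendsto_id
    have h2 : Tendsto (fun t : ℝ => -(α * t)) atTop atBot :=
      tendsto_neg_atBot_iff.2 h1
    have h3 : Tendsto (fun t : ℝ => Real.exp (-(α * t))) atTop (nhds 0) :=
      Real.tendsto_exp_atBot.comp h2
    have h4 := h3.const_mul M
    simpa using h4
  have hsqrt : Tendsto (fun t => Real.sqrt (M * Real.exp (-(α * t)))) atTop (nhds 0) := by
    have h1 := (Real.continuous_sqrt.tendsto 0).comp htend
    simpa [Function.comp_def] using h1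
  have hz0 : Tendsto (fun t => z t - z₀) atTop (nhds 0) := by
    apply squeeze_zero_norm' _ hsqrt
    filter_upwards [eventually_ge_atTop (0:ℝ)] with t ht
    have hqt := hq t ht
    have h1 : (z t - z₀)^2 ≤ M * Real.exp (-(α * t)) := by
      linarith only [hqt, sq_nonneg (u t - (1 - E))]
    rw [Real.norm_eq_abs, ← Real.sqrt_sq_eq_abs]
    exact Real.sqrt_le_sqrt h1
  have hu0 : Tendsto (fun t => u t - (1 - E)) atTop (nhds 0) := by
    apply squeeze_zero_norm' _ hsqrt
    filter_upwards [eventually_ge_atTop (0:ℝ)] with t ht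
    have hqt := hq t ht
    have h1 : (u t - (1 - E))^2 ≤ M * Real.exp (-(α * t)) := by
      linarith only [hqt, sq_nonneg (z t - z₀)]
    rw [Real.norm_eq_abs, ← Real.sqrt_sq_eq_abs]
    exact Real.sqrt_le_sqrt h1
  constructor
  · have h := tendsto_sub_nhds_zero_iff.1 hz0
    rw [← hE_def, ← hz₀_def]
    exact h
  · have h := tendsto_sub_nhds_zero_iff.1 hu0
    rw [hu_tgt]
    exact h
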